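/- Let G be a finite simple graph that contains at least one even cycle, and let ℓ_e(G) be the length of a longest even cycle of G. Then the chromatic number of G satisfies χ(G) ≤ ℓ_e(G) + 1. -/

import Mathlib

open SimpleGraph

/-- `G` contains a cycle of length `n`. -/
def SimpleGraph.HasCycleLength {V : Type*} (G : SimpleGraph V) (n : ℕ) : Prop :=
  ∃ (v : V) (c : G.Walk v v), c.IsCycle ∧ c.length = n

/-- `L_o(G)`: the set of odd cycle lengths of `G`. -/
def SimpleGraph.oddCycleLengths {V : Type*} (G : SimpleGraph V) : Set ℕ :=
  {n | Odd n ∧ G.HasCycleLength n}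

/-- `L_e(G)`: the set of even cycle lengths of `G`. -/
def SimpleGraph.evenCycleLengths {V : Type*} (G : SimpleGraph V) : Set ℕ :=
  {n | Even n ∧ G.HasCycleLength n}

/-- `G` is 2-connected: at least 3 vertices, and deleting any single vertex
leaves a connected graph. -/
def SimpleGraph.TwoConnected {V : Type*} [Fintype V] (G : SimpleGraph V) : Prop :=
  3 ≤ Fintype.card V ∧ ∀ v : V, (G.induce {v}ᶜ).Connected

section Aux

variable {V : Type*} {G : SimpleGraph V}

private lemma getVert_mem_support' {u v : V} (p : G.Walk u v) {i : ℕ} (hi : i ≤ p.length) :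
    p.getVert i ∈ p.support :=
  Walk.mem_support_iff_exists_getVert.mpr ⟨i, rfl, hi⟩

private lemma IsPath.getVert_inj' {u v : V} {p : G.Walk u v} (hp : p.IsPath) {i j : ℕ}
    (hi : i ≤ p.length) (hj : j ≤ p.length) (h : p.getVert i = p.getVert j) : i = j := by
  induction p generalizing i j with
  | nil => simp at hi hj; omega
  | @cons u x w hadj q ih =>
    rw [Walk.cons_isPath_iff] at hp
    match i, j with
    | 0, 0 => rfl
    | 0, (j+1) =>
      exfalso
      apply hp.2
      rw [Walk.getVert_zero, Walk.getVert_cons_succ] at h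
      rw [h]
      exact getVert_mem_support' q (by simpa using hj)
    | (i+1), 0 =>
      exfalso
      apply hp.2
      rw [Walk.getVert_zero, Walk.getVert_cons_succ] at h
      rw [← h]
      exact getVert_mem_support' q (by simpa using hi)
    | (i+1), (j+1) =>
      rw [Walk.getVert_cons_succ, Walk.getVert_cons_succ] at h
      have := ih hp.1 (by simpa using hi) (by simpa using hj) h
      omega

private lemma getVert_length_takeUntil' [DecidableEq V] {u v w : V} (p : G.Walk v w)
    (h : u ∈ p.support) : p.getVert ((p.takeUntil u h).length) = u := by
  have hspec := p.take_spec h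
  calc p.getVert ((p.takeUntil u h).length)
      = ((p.takeUntil u h).append (p.dropUntil u h)).getVert ((p.takeUntil u h).length) := by
        rw [hspec]
    _ = u := by
        rw [Walk.getVert_append]
        simp

private lemma exists_cycle_of_chords [DecidableEq V] {v0 w : V} (p : G.Walk v0 w)
    (hp : p.IsPath) {a b : ℕ} (ha1 : 1 ≤ a) (hab : a < b) (hb : b ≤ p.length)
    (hadja : G.Adj v0 (p.getVert a)) (hadjb : G.Adj v0 (p.getVert b)) :
    ∃ (c : G.Walk v0 v0), c.IsCycle ∧ c.length = b - a + 2 := by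
  have ha : a ≤ p.length := by omega
  have hxa_mem : p.getVert a ∈ p.support := getVert_mem_support' p ha
  set xa := p.getVert a with hxa
  set xb := p.getVert b with hxb
  set t := p.takeUntil xa hxa_mem with ht
  set d := p.dropUntil xa hxa_mem with hd
  have hspec : t.append d = p := p.take_spec hxa_mem
  have htlen : t.length = a := by
    apply IsPath.getVert_inj' hp (p.length_takeUntil_le hxa_mem) ha
    rw [getVert_length_takeUntil']
  have hlen_add : t.length + d.length = p.length := by
    rw [← Walk.length_append t d, hspec]
  have hdget : ∀ j, j ≤ d.length → d.getVert j = p.getVert (a + j) := by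
    intro j hj
    conv_rhs => rw [← hspec]
    rw [Walk.getVert_append, htlen]
    simp [Nat.add_sub_cancel_left]
  have hd_path : d.IsPath := hp.dropUntil hxa_mem
  have hxb_mem_d : xb ∈ d.support := by
    have : d.getVert (b - a) = xb := by
      rw [hdget (b - a) (by omega), hxb]; congr 1; omega
    rw [← this]
    exact getVert_mem_support' d (by omega)
  set seg := d.takeUntil xb hxb_mem_d with hseg
  have hseg_len : seg.length = b - a := by
    apply IsPath.getVert_inj' hd_path (d.length_takeUntil_le hxb_mem_d) (by omega)
    rw [getVert_length_takeUntil', hdget (b - a) (by omega)]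
    rw [hxb]; congr 1; omega
  have hseg_path : seg.IsPath := hd_path.takeUntil hxb_mem_d
  have hv0_not : v0 ∉ seg.support := by
    intro hmem
    have hmem' : v0 ∈ d.support := d.support_takeUntil_subset hxb_mem_d hmem
    obtain ⟨j, hj, hjle⟩ := Walk.mem_support_iff_exists_getVert.mp hmem'
    rw [hdget j hjle] at hj
    have h0 : p.getVert (a + j) = p.getVert 0 := by rw [hj, Walk.getVert_zero]
    have := IsPath.getVert_inj' hp (by omega) (by omega) h0
    omega
  have hne_ab : xa ≠ xb := by
    intro h
    have := IsPath.getVert_inj' hp ha hb h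
    omega
  set q2 := seg.concat hadjb.symm with hq2
  have hq2_path : q2.IsPath := by
    rw [Walk.isPath_def, hq2, Walk.support_concat]
    rw [List.nodup_append']
    refine ⟨hseg_path.support_nodup, List.nodup_singleton _, ?_⟩
    intro x hx hx'
    simp only [List.mem_singleton] at hx'
    subst hx'
    exact hv0_not hx
  refine ⟨Walk.cons hadja q2, ?_, ?_⟩
  · rw [Walk.cons_isCycle_iff]
    refine ⟨hq2_path, ?_⟩
    rw [hq2, Walk.edges_concat, List.concat_eq_append, List.mem_append, List.mem_singleton]
    rintro (hmem | hmem)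
    · exact hv0_not (seg.fst_mem_support_of_mem_edges hmem)
    · rw [Sym2.eq_iff] at hmem
      rcases hmem with ⟨h1, h2⟩ | ⟨h1, h2⟩
      · exact hadja.ne' h2
      · exact hne_ab h2
  · rw [Walk.length_cons, hq2, Walk.length_concat, hseg_len]

private lemma comb_parity {A : Finset ℕ} {d : ℕ} (hd : 3 ≤ d) (hcard : d ≤ A.card)
    (h1 : ∀ a ∈ A, 1 ≤ a) :
    ∃ a b, a < b ∧ b ∈ A ∧ (a ∈ A ∨ a = 1) ∧ Even (b - a) ∧ d ≤ b - a + 2 := by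
  classical
  set E := A.filter (fun n => n % 2 = 0) with hE
  set O := A.filter (fun n => n % 2 = 1) with hO
  have hEO : E.card + O.card = A.card := by
    have h := Finset.card_filter_add_card_filter_not (s := A) (p := fun n => n % 2 = 0)
    have hO' : O = A.filter (fun n => ¬ n % 2 = 0) := by
      ext a; simp [hO, Nat.mod_two_ne_zero]
    rw [hO']
    exact h
  by_cases hcase : d ≤ 2 * E.card
  · have hE2 : 2 ≤ E.card := by omega
    have hEne : E.Nonempty := Finset.card_pos.mp (by omega)
    set a := E.min' hEne with hamin
    set b := E.max' hEne with hbmax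
    have haE : a ∈ E := E.min'_mem hEne
    have hbE : b ∈ E := E.max'_mem hEne
    have hamem : a ∈ A ∧ a % 2 = 0 := by simpa [hE] using haE
    have hbmem : b ∈ A ∧ b % 2 = 0 := by simpa [hE] using hbE
    have hab : a < b := E.min'_lt_max'_of_card (by omega)
    have hcardle : E.card ≤ (b - a) / 2 + 1 := by
      have := Finset.card_le_card_of_injOn (s := E) (f := fun x => (x - a) / 2)
        (t := Finset.range ((b - a) / 2 + 1)) ?_ ?_
      · simpa using this
      · intro x hx
        have hx' : x ∈ A ∧ x % 2 = 0 := by simpa [hE] using hx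
        have hax : a ≤ x := E.min'_le x hx
        have hxb : x ≤ b := E.le_max' x hx
        simp only [Finset.mem_coe, Finset.mem_range]
        omega
      · intro x hx y hy hxy
        have hx' : x ∈ A ∧ x % 2 = 0 := by simpa [hE] using hx
        have hy' : y ∈ A ∧ y % 2 = 0 := by simpa [hE] using hy
        have hax : a ≤ x := E.min'_le x hx
        have hay : a ≤ y := E.min'_le y hy
        simp only at hxy
        omega
    refine ⟨a, b, hab, hbmem.1, Or.inl hamem.1, ?_, ?_⟩
    · rw [Nat.even_iff]; omega
    · omega
  · have hO2 : 2 ≤ O.card := by omega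
    have hOne : O.Nonempty := Finset.card_pos.mp (by omega)
    set b := O.max' hOne with hbmax
    have hbO : b ∈ O := O.max'_mem hOne
    have hbmem : b ∈ A ∧ b % 2 = 1 := by simpa [hO] using hbO
    have hcardle : O.card ≤ (b - 1) / 2 + 1 := by
      have := Finset.card_le_card_of_injOn (s := O) (f := fun x => (x - 1) / 2)
        (t := Finset.range ((b - 1) / 2 + 1)) ?_ ?_
      · simpa using this
      · intro x hx
        have hx' : x ∈ A ∧ x % 2 = 1 := by simpa [hO] using hx
        have hxb : x ≤ b := O.le_max' x hx
        have := h1 x hx'.1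
        simp only [Finset.mem_coe, Finset.mem_range]
        omega
      · intro x hx y hy hxy
        have hx' : x ∈ A ∧ x % 2 = 1 := by simpa [hO] using hx
        have hy' : y ∈ A ∧ y % 2 = 1 := by simpa [hO] using hy
        have := h1 x hx'.1
        have := h1 y hy'.1
        simp only at hxy
        omega
    have hb_big : d ≤ b + 1 := by omega
    refine ⟨1, b, by omega, hbmem.1, Or.inr rfl, ?_, ?_⟩
    · rw [Nat.even_iff]; omega
    · omega

private lemma colorable_of_degeneracy' {V : Type*} [Fintype V] [DecidableEq V]
    {G : SimpleGraph V} [DecidableRel G.Adj] {k : ℕ}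
    (h : ∀ S : Finset V, S.Nonempty → ∃ v ∈ S, (S.filter (fun u => G.Adj v u)).card ≤ k) :
    G.Colorable (k + 1) := by
  suffices H : ∀ (n : ℕ) (S : Finset V), S.card ≤ n → ∃ C : V → Fin (k+1),
      ∀ a ∈ S, ∀ b ∈ S, G.Adj a b → C a ≠ C b by
    obtain ⟨C, hC⟩ := H (Finset.univ.card) Finset.univ le_rfl
    exact ⟨Coloring.mk C (fun {a b} hab => hC a (Finset.mem_univ a) b (Finset.mem_univ b) hab)⟩
  intro n
  induction n with
  | zero =>
    intro S hS
    refine ⟨fun _ => 0, ?_⟩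
    have : S = ∅ := Finset.card_eq_zero.mp (by omega)
    simp [this]
  | succ n ih =>
    intro S hScard
    rcases S.eq_empty_or_nonempty with rfl | hne
    · exact ⟨fun _ => 0, by simp⟩
    obtain ⟨v, hv, hvdeg⟩ := h S hne
    obtain ⟨C, hC⟩ := ih (S.erase v) (by have := Finset.card_erase_of_mem hv; omega)
    set T := ((S.erase v).filter (fun u => G.Adj v u)).image C with hT
    have hTcard : T.card ≤ k := by
      refine le_trans Finset.card_image_le (le_trans (Finset.card_le_card ?_) hvdeg)
      intro x hx
      simp only [Finset.mem_filter, Finset.mem_erase] at hx ⊢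
      exact ⟨hx.1.2, hx.2⟩
    obtain ⟨c, hc⟩ : ∃ c : Fin (k+1), c ∉ T := by
      by_contra hcon
      push_neg at hcon
      have hsub : (Finset.univ : Finset (Fin (k+1))) ⊆ T := fun x _ => hcon x
      have := Finset.card_le_card hsub
      simp only [Finset.card_univ, Fintype.card_fin] at this
      omega
    refine ⟨Function.update C v c, ?_⟩
    intro x hx y hy hxy
    by_cases hxv : x = v
    · subst hxv
      by_cases hyv : y = x
      · subst hyv; exact absurd rfl hxy.ne
      · rw [Function.update_self, Function.update_of_ne hyv]
        intro heq
        apply hc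
        rw [hT, heq]
        exact Finset.mem_image_of_mem C (by
          simp only [Finset.mem_filter, Finset.mem_erase]
          exact ⟨⟨hyv, hy⟩, hxy⟩)
    · by_cases hyv : y = v
      · subst hyv
        rw [Function.update_self, Function.update_of_ne hxv]
        intro heq
        apply hc
        rw [hT, ← heq]
        exact Finset.mem_image_of_mem C (by
          simp only [Finset.mem_filter, Finset.mem_erase]
          exact ⟨⟨hxv, hx⟩, hxy.symm⟩)
      · rw [Function.update_of_ne hxv, Function.update_of_ne hyv]
        exact hC x (Finset.mem_erase.mpr ⟨hxv, hx⟩) y (Finset.mem_erase.mpr ⟨hyv, hy⟩) hxy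

private lemma exists_even_cycle_of_min_degree' {V : Type*} [Fintype V] [DecidableEq V]
    {G : SimpleGraph V} [DecidableRel G.Adj] {S : Finset V} {d : ℕ}
    (hd : 3 ≤ d) (hS : S.Nonempty)
    (hdeg : ∀ v ∈ S, d ≤ (S.filter (fun u => G.Adj v u)).card) :
    ∃ n, Even n ∧ d ≤ n ∧ G.HasCycleLength n := by
  set P := {n : ℕ | ∃ (x : V) (y : V) (q : G.Walk x y),
      q.IsPath ∧ (∀ z ∈ q.support, z ∈ S) ∧ q.length = n} with hP
  obtain ⟨v, hv⟩ := hS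
  have hPne : (0 : ℕ) ∈ P := by
    refine ⟨v, v, Walk.nil, Walk.IsPath.nil, ?_, rfl⟩
    intro z hz
    simp only [Walk.support_nil, List.mem_singleton] at hz
    subst hz; exact hv
  have hbdd : BddAbove P := by
    refine ⟨S.card, fun n hn => ?_⟩
    obtain ⟨x, y, q, hq, hqS, hql⟩ := hn
    have hsub : q.support.toFinset ⊆ S := fun z hz => hqS z (List.mem_toFinset.mp hz)
    have hcard := Finset.card_le_card hsub
    rw [List.toFinset_card_of_nodup hq.support_nodup, Walk.length_support] at hcard
    omega
  have hn0 : sSup P ∈ P := Nat.sSup_mem ⟨0, hPne⟩ hbdd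
  set n0 := sSup P with hn0def
  obtain ⟨v0, w, p, hp, hpS, hplen⟩ := hn0
  have hmax : ∀ u, u ∈ S → G.Adj v0 u → u ∈ p.support := by
    intro u huS hadj
    by_contra hnmem
    have hcons : (Walk.cons hadj.symm p).IsPath := by
      rw [Walk.cons_isPath_iff]; exact ⟨hp, hnmem⟩
    have hmem : n0 + 1 ∈ P := by
      refine ⟨u, w, Walk.cons hadj.symm p, hcons, ?_, by simp [hplen]⟩
      intro z hz
      rw [Walk.support_cons, List.mem_cons] at hz
      rcases hz with rfl | hz
      · exact huS
      · exact hpS z hz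
    have := le_csSup hbdd hmem
    omega
  set N := S.filter (fun u => G.Adj v0 u) with hN
  have hNcard : d ≤ N.card := hdeg v0 (hpS v0 p.start_mem_support)
  set f : V → ℕ := fun u => if h : u ∈ p.support then (p.takeUntil u h).length else 0 with hf
  have hkey : ∀ u ∈ N, p.getVert (f u) = u ∧ f u ≤ p.length := by
    intro u hu
    rw [hN, Finset.mem_filter] at hu
    have hmem := hmax u hu.1 hu.2
    constructor
    · rw [hf]; simp only [dif_pos hmem]
      exact getVert_length_takeUntil' p hmem
    · rw [hf]; simp only [dif_pos hmem]
      exact p.length_takeUntil_le hmem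
  set A := N.image f with hA
  have hAcard : d ≤ A.card := by
    rw [hA, Finset.card_image_of_injOn]
    · exact hNcard
    · intro u hu u' hu' heq
      have h1 := (hkey u hu).1
      have h2 := (hkey u' hu').1
      rw [← h1, ← h2, heq]
  have hAprop : ∀ a ∈ A, 1 ≤ a ∧ a ≤ p.length ∧ G.Adj v0 (p.getVert a) := by
    intro a ha
    rw [hA, Finset.mem_image] at ha
    obtain ⟨u, hu, rfl⟩ := ha
    obtain ⟨hgv, hle⟩ := hkey u hu
    have hadj : G.Adj v0 u := by
      rw [hN, Finset.mem_filter] at hu; exact hu.2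
    refine ⟨?_, hle, by rw [hgv]; exact hadj⟩
    by_contra hcon
    have hfz : f u = 0 := by omega
    rw [hfz, Walk.getVert_zero] at hgv
    exact G.loopless.irrefl v0 (hgv ▸ hadj)
  obtain ⟨a, b, hab, hbA, haA, heven, hd2⟩ :=
    comb_parity hd hAcard (fun a ha => (hAprop a ha).1)
  obtain ⟨hb1, hble, hbadj⟩ := hAprop b hbA
  have ha1 : 1 ≤ a := by
    rcases haA with haA | rfl
    · exact (hAprop a haA).1
    · exact le_rfl
  have hadja : G.Adj v0 (p.getVert a) := by
    rcases haA with haA | rfl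
    · exact (hAprop a haA).2.2
    · have h01 := p.adj_getVert_succ (i := 0) (by omega)
      rwa [Walk.getVert_zero, zero_add] at h01
  obtain ⟨c, hcyc, hclen⟩ := exists_cycle_of_chords p hp ha1 hab hble hadja hbadj
  refine ⟨b - a + 2, ?_, by omega, v0, c, hcyc, hclen⟩
  rw [Nat.even_iff] at heven ⊢
  omega

end Aux

/-- If `G` contains an even cycle and `ℓ_e(G)` is the length of a longest
even cycle of `G`, then `χ(G) ≤ ℓ_e(G) + 1`. -/
theorem chromatic_le_longest_even_cycle_add_one {V : Type*} [Fintype V]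
    (G : SimpleGraph V) (le : ℕ)
    (hle_even : Even le) (hle_cyc : G.HasCycleLength le)
    (hle_max : ∀ n, Even n → G.HasCycleLength n → n ≤ le) :
    G.chromaticNumber ≤ ((le + 1 : ℕ) : ℕ∞) := by
  classical
  have hle3 : 3 ≤ le := by
    obtain ⟨v, c, hc, hlen⟩ := hle_cyc
    have := hc.three_le_length
    omega
  have hdeg : ∀ S : Finset V, S.Nonempty →
      ∃ v ∈ S, (S.filter (fun u => G.Adj v u)).card ≤ le := by
    intro S hS
    by_contra hcon
    push_neg at hcon
    obtain ⟨n, hne, hdn, hcyc⟩ := exists_even_cycle_of_min_degree' (d := le + 1)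
      (by omega) hS (fun v hv => hcon v hv)
    have := hle_max n hne hcyc
    omega
  have hcol := colorable_of_degeneracy' hdeg
  exact_mod_cast hcol.chromaticNumber_le
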